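/- Let n ≥ 2 be an integer and let r : (−T, T) → ℝ be a maximal n-catenoid profile function. Suppose z : J → ℝ is a differentiable function on an interval J ⊆ [0, ∞) satisfying z(c)·r'(z(c) − c) = r(z(c) − c) and z(c) ≠ 0 for all c ∈ J. Then for each c ∈ J one has z'(c) = 1 − r'(z(c) − c)² / ((n−1)(1 + r'(z(c) − c)²)), which is strictly positive, and (d/dc)(z(c) − c) = − r'(z(c) − c)² / ((n−1)(1 + r'(z(c) − c)²)), which is strictly negative. -/

import Mathlib

/-- A maximal `n`-catenoid profile function: a twice differentiable positive function
`r` on the interval `(-T, T)` (where `0 < T ≤ ∞`, encoded via `T : EReal`) with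
`r 0 = 1`, `r' 0 = 0`, satisfying the catenoid ODE `r·r'' − (n−1)(1 + r'²) = 0`,
and with `r z → ∞` as `z → ±T`. -/
def IsMaxCatenoidProfile (n : ℕ) (T : EReal) (r : ℝ → ℝ) : Prop :=
  0 < T ∧
  (∀ z : ℝ, (z : EReal) ∈ Set.Ioo (-T) T → 0 < r z) ∧
  (∀ z : ℝ, (z : EReal) ∈ Set.Ioo (-T) T →
    DifferentiableAt ℝ r z ∧ DifferentiableAt ℝ (deriv r) z) ∧
  r 0 = 1 ∧ deriv r 0 = 0 ∧
  (∀ z : ℝ, (z : EReal) ∈ Set.Ioo (-T) T →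
    r z * deriv (deriv r) z - ((n : ℝ) - 1) * (1 + (deriv r z) ^ 2) = 0) ∧
  Filter.Tendsto r
    (Filter.comap (fun z : ℝ => (z : EReal)) (nhdsWithin T (Set.Iio T))) Filter.atTop ∧
  Filter.Tendsto r
    (Filter.comap (fun z : ℝ => (z : EReal)) (nhdsWithin (-T) (Set.Ioi (-T)))) Filter.atTop


theorem radial_tangency_point_monotonicity (n : ℕ) (hn : 2 ≤ n)
    (T : EReal) (r : ℝ → ℝ) (hr : IsMaxCatenoidProfile n T r)
    (J : Set ℝ) (hJ : J ⊆ Set.Ici (0 : ℝ)) (hJconn : J.OrdConnected)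
    (z : ℝ → ℝ) (hzdiff : DifferentiableOn ℝ z J)
    (hdom : ∀ c ∈ J, ((z c - c : ℝ) : EReal) ∈ Set.Ioo (-T) T)
    (heq : ∀ c ∈ J, z c * deriv r (z c - c) = r (z c - c))
    (hne : ∀ c ∈ J, z c ≠ 0) :
    ∀ c ∈ J,
      HasDerivWithinAt z
        (1 - (deriv r (z c - c)) ^ 2 /
          (((n : ℝ) - 1) * (1 + (deriv r (z c - c)) ^ 2))) J c ∧
      0 < 1 - (deriv r (z c - c)) ^ 2 /
          (((n : ℝ) - 1) * (1 + (deriv r (z c - c)) ^ 2)) ∧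
      HasDerivWithinAt (fun c => z c - c)
        (-((deriv r (z c - c)) ^ 2 /
          (((n : ℝ) - 1) * (1 + (deriv r (z c - c)) ^ 2)))) J c ∧
      -((deriv r (z c - c)) ^ 2 /
          (((n : ℝ) - 1) * (1 + (deriv r (z c - c)) ^ 2))) < 0 := by
  obtain ⟨hT, hrpos, hrdiff, hr0, hr'0, hode, -, -⟩ := hr
  set D : Set ℝ := {x : ℝ | (x : EReal) ∈ Set.Ioo (-T) T} with hD
  have hn1 : (1 : ℝ) ≤ (n : ℝ) - 1 := by
    have : (2 : ℝ) ≤ (n : ℝ) := by exact_mod_cast hn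
    linarith
  have hDopen : IsOpen D := isOpen_Ioo.preimage continuous_coe_real_ereal
  have hDconv : Convex ℝ D := by
    rw [convex_iff_ordConnected]
    exact ⟨fun a ha b hb x hx =>
      ⟨lt_of_lt_of_le ha.1 (EReal.coe_le_coe_iff.2 hx.1),
       lt_of_le_of_lt (EReal.coe_le_coe_iff.2 hx.2) hb.2⟩⟩
  have h0D : (0 : ℝ) ∈ D := by
    constructor
    · rw [show ((0:ℝ):EReal) = -0 by simp]
      exact EReal.neg_lt_neg_iff.2 (by simpa using hT)
    · simpa using hT
  have hr''pos : ∀ x ∈ D, 0 < deriv (deriv r) x := by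
    intro x hx
    have h1 := hode x hx
    have h2 := hrpos x hx
    nlinarith [sq_nonneg (deriv r x)]
  have hmono : StrictMonoOn (deriv r) D := by
    apply strictMonoOn_of_deriv_pos hDconv
    · intro x hx
      exact ((hrdiff x hx).2.continuousAt).continuousWithinAt
    · intro x hx
      rw [hDopen.interior_eq] at hx
      exact hr''pos x hx
  intro c hc
  have hwD : (z c - c) ∈ D := hdom c hc
  have hwne : z c - c ≠ 0 := by
    intro h
    have h2 := heq c hc
    rw [h, hr'0, hr0] at h2
    simp at h2
  set p := deriv r (z c - c) with hp
  have hr'ne : p ≠ 0 := by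
    rcases lt_or_gt_of_ne hwne with h | h
    · have := hmono hwD h0D h
      rw [hr'0] at this
      exact ne_of_lt this
    · have := hmono h0D hwD h
      rw [hr'0] at this
      exact ne_of_gt this
  have hppos : 0 < p ^ 2 := by positivity
  have hden : 0 < ((n : ℝ) - 1) * (1 + p ^ 2) := by nlinarith
  have hlt1 : p ^ 2 / (((n : ℝ) - 1) * (1 + p ^ 2)) < 1 := by
    rw [div_lt_one hden]; nlinarith
  have hneg : -(p ^ 2 / (((n : ℝ) - 1) * (1 + p ^ 2))) < 0 := by
    have := div_pos hppos hden
    linarith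
  have key : HasDerivWithinAt z (1 - p ^ 2 / (((n : ℝ) - 1) * (1 + p ^ 2))) J c := by
    by_cases hacc : nhdsWithin c (J \ {c}) = ⊥
    · exact HasFDerivWithinAt.of_not_accPt (fun h => (accPt_principal_iff_nhdsWithin.1 h).ne hacc)
    · -- accumulation point: uniqueness of derivative
      have hne_bot : (nhdsWithin c (J \ {c})).NeBot := ⟨hacc⟩
      have hcc : c ∈ closure (J \ {c}) := mem_closure_iff_nhdsWithin_neBot.2 hne_bot
      have hJne : (J \ {c}).Nonempty := by
        by_contra h
        rw [Set.not_nonempty_iff_eq_empty] at h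
        rw [h, closure_empty] at hcc
        exact hcc
      obtain ⟨c', hc'⟩ := hJne
      have hJconv : Convex ℝ J := convex_iff_ordConnected.2 hJconn
      have hint : (interior J).Nonempty := by
        have hcne : c' ≠ c := fun h => hc'.2 (by simp [h])
        rcases lt_or_gt_of_ne hcne with h | h
        · refine ⟨(c' + c) / 2, ?_⟩
          apply interior_maximal (Set.Ioo_subset_Icc_self.trans (hJconn.out hc'.1 hc))
            isOpen_Ioo
          constructor <;> linarith
        · refine ⟨(c + c') / 2, ?_⟩
          apply interior_maximal (Set.Ioo_subset_Icc_self.trans (hJconn.out hc hc'.1))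
            isOpen_Ioo
          constructor <;> linarith
      have hUD : UniqueDiffWithinAt ℝ J c :=
        uniqueDiffWithinAt_convex hJconv hint (subset_closure hc)
      set d := derivWithin z J c with hdd
      have hd : HasDerivWithinAt z d J c := (hzdiff c hc).hasDerivWithinAt
      have hwz : HasDerivWithinAt (fun x => z x - x) (d - 1) J c :=
        hd.sub (hasDerivWithinAt_id c J)
      set q := deriv (deriv r) (z c - c) with hq
      have hg1 : HasDerivAt (deriv r) q (z c - c) := (hrdiff _ hwD).2.hasDerivAt
      have hg2 : HasDerivAt r p (z c - c) := (hrdiff _ hwD).1.hasDerivAt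
      have hcomp1 : HasDerivWithinAt (fun x => deriv r (z x - x)) (q * (d - 1)) J c := by
        have := hg1.scomp_hasDerivWithinAt_of_eq c hwz rfl
        rw [smul_eq_mul, mul_comm] at this
        exact this
      have hcomp2 : HasDerivWithinAt (fun x => r (z x - x)) (p * (d - 1)) J c := by
        have := hg2.scomp_hasDerivWithinAt_of_eq c hwz rfl
        rw [smul_eq_mul, mul_comm] at this
        exact this
      have hG : HasDerivWithinAt (fun x => z x * deriv r (z x - x) - r (z x - x))
          (d * p + z c * (q * (d - 1)) - p * (d - 1)) J c :=
        (hd.mul hcomp1).sub hcomp2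
      have hG0 : HasDerivWithinAt (fun _ : ℝ => (0 : ℝ))
          (d * p + z c * (q * (d - 1)) - p * (d - 1)) J c := by
        apply hG.congr
        · intro x hx
          rw [heq x hx]; ring
        · rw [heq c hc]; ring
      have hGz : d * p + z c * (q * (d - 1)) - p * (d - 1) = 0 := by
        have h1 := hG0.derivWithin hUD
        rw [derivWithin_fun_const (𝕜 := ℝ) J (0:ℝ)] at h1
        exact h1.symm
      have h1 : d * (z c * q) = z c * q - p := by linear_combination hGz
      have hA : z c * p * q = ((n : ℝ) - 1) * (1 + p ^ 2) := by
        have hode' := hode (z c - c) hwD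
        have hRz : r (z c - c) = z c * p := (heq c hc).symm
        rw [hRz] at hode'
        linarith [hode']
      have h2 : d * (((n : ℝ) - 1) * (1 + p ^ 2)) =
          ((n : ℝ) - 1) * (1 + p ^ 2) - p ^ 2 := by
        linear_combination p * h1 - (d - 1) * hA
      have hdv : d = 1 - p ^ 2 / (((n : ℝ) - 1) * (1 + p ^ 2)) := by
        field_simp
        linear_combination h2
      rw [← hdv]
      exact hd
  refine ⟨key, by linarith, ?_, hneg⟩
  have h3 := key.sub (hasDerivWithinAt_id c J)
  exact h3.congr_deriv (by ring)
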